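/- Locality identity for the transmitted vectors (equation (ind)): Define the (mn) × (n − s) real matrix B by B_{(i−1)m+u, j} = (coefficient of x^{j−1} in pᵢ⁽ᵘ⁾). Then for every row vector z ∈ ℝ^{mn}, written in blocks z = (y⁽¹⁾, …, y⁽ⁿ⁾) with each y⁽ʲ⁾ ∈ ℝ^m, and every i ∈ {1, …, n}: z · B · (1, θᵢ, θᵢ², …, θᵢ^{n−s−1})ᵀ = Σ_{j=0}^{d−1} Σ_{u=1}^{m} pᵢ₍⊕ⱼ₎⁽ᵘ⁾(θᵢ) · y⁽ⁱ⊕ʲ⁾_u, where i⊕j abbreviates i ⊕ j (and i ⊕ 0 := i). In particular this quantity depends only on the blocks y⁽ⁱ⁾, y⁽ⁱ⊕¹⁾, …, y⁽ⁱ⊕⁽ᵈ⁻¹⁾⁾. -/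

import Mathlib

open Polynomial
open Fin.NatCast

/-- `gcPoly n d θ i` is the polynomial `pᵢ(x) = ∏_{j=1}^{n−d} (x − θ_{i⊕j})`,
where `⊕` is (1-indexed) addition wrapping around modulo `n`, realized here as
addition in `Fin n` (indices shifted to be 0-based). -/
noncomputable def gcPoly (n d : ℕ) [NeZero n] (θ : Fin n → ℝ) (i : Fin n) :
    Polynomial ℝ :=
  ∏ j ∈ Finset.Icc 1 (n - d), (X - C (θ (i + (j : Fin n))))

/-- `gcPolyRec n d θ i u` is the polynomial `pᵢ⁽ᵘ⁺¹⁾` (so `u = 0` gives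
`pᵢ⁽¹⁾ = pᵢ`), defined recursively by
`pᵢ⁽ᵘ⁾(x) = x·pᵢ⁽ᵘ⁻¹⁾(x) − c·pᵢ⁽¹⁾(x)` with `c` the coefficient of
`x^{n−d−1}` in `pᵢ⁽ᵘ⁻¹⁾`. -/
noncomputable def gcPolyRec (n d : ℕ) [NeZero n] (θ : Fin n → ℝ) (i : Fin n) :
    ℕ → Polynomial ℝ
  | 0 => gcPoly n d θ i
  | u + 1 => X * gcPolyRec n d θ i u
      - C ((gcPolyRec n d θ i u).coeff (n - d - 1)) * gcPoly n d θ i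

/-- The `(mn) × (n − s)` coefficient matrix `B`: the row indexed by the pair
`(i, u)` (corresponding to row `(i−1)m + u` in 1-based indexing) and column `j`
contains the coefficient of `x^{j−1}` in `pᵢ⁽ᵘ⁾`. -/
noncomputable def gcB (n d s m : ℕ) [NeZero n] (θ : Fin n → ℝ) :
    Matrix (Fin n × Fin m) (Fin (n - s)) ℝ :=
  fun r j => (gcPolyRec n d θ r.1 r.2.val).coeff j.val

/-- Locality identity (equation (ind)): for every block row vector
`z = (y⁽¹⁾, …, y⁽ⁿ⁾)` with `y⁽ʲ⁾ ∈ ℝ^m` and every `i ∈ [n]`,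
`z · B · (1, θᵢ, …, θᵢ^{n−s−1})ᵀ
  = ∑_{j=0}^{d−1} ∑_{u=1}^{m} pᵢ₍⊕ⱼ₎⁽ᵘ⁾(θᵢ) · y⁽ⁱ⊕ʲ⁾_u`;
in particular, this quantity depends only on the blocks
`y⁽ⁱ⁾, y⁽ⁱ⊕¹⁾, …, y⁽ⁱ⊕⁽ᵈ⁻¹⁾⁾` of `z`. -/
lemma gcPoly_natDegree_le (n d : ℕ) [NeZero n] (θ : Fin n → ℝ) (i : Fin n) :
    (gcPoly n d θ i).natDegree ≤ n - d := by
  unfold gcPoly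
  refine le_trans (Polynomial.natDegree_prod_le _ _) ?_
  have h : ∀ j ∈ Finset.Icc 1 (n - d), (X - C (θ (i + (j : Fin n)))).natDegree = 1 :=
    fun j _ => natDegree_X_sub_C _
  rw [Finset.sum_congr rfl h]
  simp [Nat.card_Icc]

lemma gcPolyRec_natDegree_le (n d : ℕ) [NeZero n] (θ : Fin n → ℝ) (i : Fin n)
    (u : ℕ) : (gcPolyRec n d θ i u).natDegree ≤ n - d + u := by
  induction u with
  | zero => simpa [gcPolyRec] using gcPoly_natDegree_le n d θ i
  | succ u ih =>
    simp only [gcPolyRec]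
    refine le_trans (natDegree_sub_le _ _) (max_le ?_ ?_)
    · refine le_trans (natDegree_mul_le) ?_
      have := natDegree_X_le (R := ℝ)
      omega
    · refine le_trans (natDegree_mul_le) ?_
      have := gcPoly_natDegree_le n d θ i
      simp only [natDegree_C]
      omega

lemma gcPolyRec_eval_zero (n d : ℕ) [NeZero n] (θ : Fin n → ℝ) (i : Fin n)
    (x : ℝ) (h : (gcPoly n d θ i).eval x = 0) (u : ℕ) :
    (gcPolyRec n d θ i u).eval x = 0 := by
  induction u with
  | zero => simpa [gcPolyRec] using h
  | succ u ih => simp [gcPolyRec, h, ih]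

lemma gcPoly_eval_root (n d : ℕ) [NeZero n] (θ : Fin n → ℝ) (i : Fin n)
    (k : ℕ) (hk1 : d ≤ k) (hk2 : k < n) :
    (gcPoly n d θ (i + (k : Fin n))).eval (θ i) = 0 := by
  unfold gcPoly
  rw [eval_prod]
  apply Finset.prod_eq_zero (i := n - k)
  · simp only [Finset.mem_Icc]; omega
  · have h1 : ((k : Fin n) + ((n - k : ℕ) : Fin n)) = 0 := by
      rw [← Nat.cast_add]
      have : k + (n - k) = n := by omega
      rw [this, Fin.natCast_self]
    have h2 : (i + (k : Fin n)) + ((n - k : ℕ) : Fin n) = i := by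
      rw [add_assoc, h1, add_zero]
    rw [h2]; simp


theorem gcB_locality_identity
    (n d s m : ℕ) [NeZero n] (hm : 1 ≤ m) (hs : 0 ≤ s) (hdsm : d = s + m)
    (hdn : d ≤ n) (θ : Fin n → ℝ) (hθ : Function.Injective θ) :
    (∀ (z : Fin n → Fin m → ℝ) (i : Fin n),
      ∑ j : Fin n, ∑ u : Fin m,
          z j u * ∑ t : Fin (n - s), gcB n d s m θ (j, u) t * θ i ^ t.val
        = ∑ j ∈ Finset.range d, ∑ u : Fin m,
            (gcPolyRec n d θ (i + (j : Fin n)) u.val).eval (θ i) *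
              z (i + (j : Fin n)) u) ∧
    (∀ (z z' : Fin n → Fin m → ℝ) (i : Fin n),
      (∀ j ∈ Finset.range d, z (i + (j : Fin n)) = z' (i + (j : Fin n))) →
      ∑ j : Fin n, ∑ u : Fin m,
          z j u * ∑ t : Fin (n - s), gcB n d s m θ (j, u) t * θ i ^ t.val
        = ∑ j : Fin n, ∑ u : Fin m,
            z' j u * ∑ t : Fin (n - s), gcB n d s m θ (j, u) t * θ i ^ t.val) := by
  have key : ∀ (z : Fin n → Fin m → ℝ) (i : Fin n),
      ∑ j : Fin n, ∑ u : Fin m,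
          z j u * ∑ t : Fin (n - s), gcB n d s m θ (j, u) t * θ i ^ t.val
        = ∑ j ∈ Finset.range d, ∑ u : Fin m,
            (gcPolyRec n d θ (i + (j : Fin n)) u.val).eval (θ i) *
              z (i + (j : Fin n)) u := by
    intro z i
    -- Step 1 : inner sum equals evaluation
    have step1 : ∀ (j : Fin n) (u : Fin m),
        (∑ t : Fin (n - s), gcB n d s m θ (j, u) t * θ i ^ t.val)
          = (gcPolyRec n d θ j u.val).eval (θ i) := by
      intro j u
      have hdeg : (gcPolyRec n d θ j u.val).natDegree < n - s := by
        have h1 := gcPolyRec_natDegree_le n d θ j u.val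
        have h2 := u.isLt
        omega
      rw [Polynomial.eval_eq_sum_range' hdeg]
      rw [← Fin.sum_univ_eq_sum_range
        (fun t => (gcPolyRec n d θ j u.val).coeff t * θ i ^ t) (n - s)]
      rfl
    simp only [step1]
    -- Step 2 : reindex the outer sum by translation
    have F : Fin n → ℝ := fun j => ∑ u : Fin m,
        z j u * (gcPolyRec n d θ j u.val).eval (θ i)
    have reindex :
        (∑ j : Fin n, ∑ u : Fin m,
            z j u * (gcPolyRec n d θ j u.val).eval (θ i))
          = ∑ k ∈ Finset.range n, ∑ u : Fin m,
              z (i + (k : Fin n)) u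
                * (gcPolyRec n d θ (i + (k : Fin n)) u.val).eval (θ i) := by
      rw [← Fin.sum_univ_eq_sum_range
        (fun k => ∑ u : Fin m, z (i + (k : Fin n)) u
          * (gcPolyRec n d θ (i + (k : Fin n)) u.val).eval (θ i)) n]
      simp only [Fin.cast_val_eq_self]
      exact (Fintype.sum_equiv (Equiv.addLeft i)
        (fun k => ∑ u : Fin m, z (i + k) u
          * (gcPolyRec n d θ (i + k) u.val).eval (θ i))
        (fun j => ∑ u : Fin m, z j u
          * (gcPolyRec n d θ j u.val).eval (θ i))
        (fun k => rfl)).symm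
    rw [reindex]
    -- Step 3 : split the range and kill the tail
    rw [Finset.range_eq_Ico, ← Finset.sum_Ico_consecutive _ (Nat.zero_le d) hdn]
    have tail : ∑ k ∈ Finset.Ico d n, ∑ u : Fin m,
        z (i + (k : Fin n)) u
          * (gcPolyRec n d θ (i + (k : Fin n)) u.val).eval (θ i) = 0 := by
      refine Finset.sum_eq_zero fun k hk => ?_
      rw [Finset.mem_Ico] at hk
      refine Finset.sum_eq_zero fun u _ => ?_
      rw [gcPolyRec_eval_zero n d θ _ _ (gcPoly_eval_root n d θ i k hk.1 hk.2),
        mul_zero]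
    rw [tail, add_zero, ← Finset.range_eq_Ico]
    exact Finset.sum_congr rfl fun k _ =>
      Finset.sum_congr rfl fun u _ => mul_comm _ _
  refine ⟨key, fun z z' i h => ?_⟩
  rw [key z i, key z' i]
  exact Finset.sum_congr rfl fun j hj => by rw [h j hj]
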